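/- Let h : (0,∞)³ → (0,∞) be given by h(x,y,v) = x^α y^β v^γ exp(-v(x+y+1)/2) with α, β > 0 and γ > 0, and fix G > 0, S ≥ 0, L ≥ 0. Define Φ(F) = (∫₀^F ∫₀^G ∫_{LS}^∞ x·h(x,y,v) dv dy dx)/(∫₀^F ∫₀^G ∫_{LS}^∞ h(x,y,v) dv dy dx) for F > 0. Then Φ is non-decreasing in F. -/

import Mathlib

open MeasureTheory Set

theorem stmt_9 (α β γ : ℝ) (hα : 0 < α) (hβ : 0 < β) (hγ : 0 < γ)
    (G S L : ℝ) (hG : 0 < G) (hS : 0 ≤ S) (hL : 0 ≤ L)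
    (h : ℝ → ℝ → ℝ → ℝ)
    (hh : ∀ x y v, h x y v = x ^ α * y ^ β * v ^ γ * Real.exp (-v * (x + y + 1) / 2))
    (Φ : ℝ → ℝ)
    (hΦ : ∀ F > 0, Φ F =
      (∫ x in (0:ℝ)..F, ∫ y in (0:ℝ)..G, ∫ v in Ioi (L * S), x * h x y v) /
      (∫ x in (0:ℝ)..F, ∫ y in (0:ℝ)..G, ∫ v in Ioi (L * S), h x y v)) :
    ∀ F₁ F₂ : ℝ, 0 < F₁ → F₁ ≤ F₂ → Φ F₁ ≤ Φ F₂ := by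
  intro F₁ F₂ hF₁ hF₁₂
  have hF₂ : 0 < F₂ := lt_of_lt_of_le hF₁ hF₁₂
  set c : ℝ := L * S with hc
  have hc0 : 0 ≤ c := mul_nonneg hL hS
  -- the innermost integral as a function of s := x + y + 1 (truncated at 1 for globality)
  set J : ℝ → ℝ := fun s => ∫ v in Ioi c, v ^ γ * Real.exp (-(max s 1 / 2) * v) with hJdef
  have hmaxpos : ∀ s : ℝ, 0 < max s 1 / 2 := fun s => by
    have : (1:ℝ) ≤ max s 1 := le_max_right _ _
    linarith
  have hJint : ∀ s : ℝ,
      IntegrableOn (fun v : ℝ => v ^ γ * Real.exp (-(max s 1 / 2) * v)) (Ioi c) := by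
    intro s
    have h0 : IntegrableOn (fun v : ℝ => v ^ γ * Real.exp (-(max s 1 / 2) * v ^ (1:ℝ)))
        (Ioi 0) :=
      integrableOn_rpow_mul_exp_neg_mul_rpow (by linarith : (-1:ℝ) < γ) one_pos (hmaxpos s)
    have h1 : IntegrableOn (fun v : ℝ => v ^ γ * Real.exp (-(max s 1 / 2) * v)) (Ioi 0) := by
      refine h0.congr_fun (fun v hv => by simp only [Real.rpow_one]) measurableSet_Ioi
    exact h1.mono_set (Ioi_subset_Ioi hc0)
  have hJnonneg : ∀ s : ℝ, 0 ≤ J s := by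
    intro s
    refine setIntegral_nonneg measurableSet_Ioi fun v hv => ?_
    have hv0 : 0 ≤ v := le_of_lt (lt_of_le_of_lt hc0 hv)
    exact mul_nonneg (Real.rpow_nonneg hv0 γ) (Real.exp_pos _).le
  have hJpos : ∀ s : ℝ, 0 < J s := by
    intro s
    rw [hJdef]
    rw [setIntegral_pos_iff_support_of_nonneg_ae ?_ (hJint s)]
    · refine lt_of_lt_of_le ?_ (measure_mono (subset_inter ?_ subset_rfl))
      · rw [Real.volume_Ioi]; exact ENNReal.zero_lt_top
      · intro v hv
        have hv0 : 0 < v := lt_of_le_of_lt hc0 hv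
        exact ne_of_gt (mul_pos (Real.rpow_pos_of_pos hv0 γ) (Real.exp_pos _))
    · filter_upwards [ae_restrict_mem measurableSet_Ioi] with v hv
      have hv0 : 0 ≤ v := le_of_lt (lt_of_le_of_lt hc0 hv)
      exact mul_nonneg (Real.rpow_nonneg hv0 γ) (Real.exp_pos _).le
  have hJanti : Antitone J := by
    intro s₁ s₂ hs
    refine setIntegral_mono_on (hJint s₂) (hJint s₁) measurableSet_Ioi fun v hv => ?_
    have hv0 : 0 ≤ v := le_of_lt (lt_of_le_of_lt hc0 hv)
    have hle : -(max s₂ 1 / 2) * v ≤ -(max s₁ 1 / 2) * v := by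
      have : max s₁ 1 ≤ max s₂ 1 := max_le_max hs le_rfl
      nlinarith
    exact mul_le_mul_of_nonneg_left (Real.exp_le_exp.2 hle) (Real.rpow_nonneg hv0 γ)
  have hJmeas : Measurable J := hJanti.measurable
  -- the middle integral
  set Q : ℝ → ℝ := fun x => ∫ y in (0:ℝ)..G, y ^ β * J (max x 0 + y + 1) with hQdef
  have hQint : ∀ x : ℝ,
      IntervalIntegrable (fun y => y ^ β * J (max x 0 + y + 1)) volume 0 G := by
    intro x
    have hbnd : IntervalIntegrable (fun y : ℝ => y ^ β * J 0) volume 0 G :=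
      (intervalIntegral.intervalIntegrable_rpow' (by linarith : (-1:ℝ) < β)).mul_const _
    refine hbnd.mono_fun ?_ ?_
    · refine Measurable.aestronglyMeasurable ?_
      exact (by fun_prop : Measurable fun y : ℝ => y ^ β).mul
        (hJmeas.comp (by fun_prop : Measurable fun y : ℝ => max x 0 + y + 1))
    · rw [uIoc_of_le hG.le]
      filter_upwards [ae_restrict_mem measurableSet_Ioc] with y hy
      have hy0 : 0 < y := hy.1
      have h1 : 0 ≤ y ^ β := Real.rpow_nonneg hy0.le β
      have h2 : J (max x 0 + y + 1) ≤ J 0 := hJanti (by positivity)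
      have h3 : (0:ℝ) ≤ y ^ β * J (max x 0 + y + 1) := mul_nonneg h1 (hJnonneg _)
      simp only [Real.norm_eq_abs, abs_of_nonneg h3,
        abs_of_nonneg (mul_nonneg h1 (hJnonneg 0))]
      exact mul_le_mul_of_nonneg_left h2 h1
  have hQanti : Antitone Q := by
    intro x₁ x₂ hx
    refine intervalIntegral.integral_mono_on hG.le (hQint x₂) (hQint x₁) fun y hy => ?_
    exact mul_le_mul_of_nonneg_left
      (hJanti (by simp only [add_le_add_iff_right]; exact max_le_max hx le_rfl))
      (Real.rpow_nonneg hy.1 β)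
  have hQnonneg : ∀ x, 0 ≤ Q x := fun x =>
    intervalIntegral.integral_nonneg hG.le fun y hy =>
      mul_nonneg (Real.rpow_nonneg hy.1 β) (hJnonneg _)
  have hQpos : ∀ x, 0 < Q x := fun x =>
    intervalIntegral.intervalIntegral_pos_of_pos_on (hQint x)
      (fun y hy => mul_pos (Real.rpow_pos_of_pos hy.1 β) (hJpos _)) hG
  have hQmeas : Measurable Q := hQanti.measurable
  -- the weight function
  set W : ℝ → ℝ := fun x => max x 0 ^ α * Q x with hWdef
  have hWmeas : Measurable W :=
    ((by fun_prop : Measurable fun x : ℝ => max x 0 ^ α)).mul hQmeas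
  have hWnonneg : ∀ x, 0 ≤ W x := fun x =>
    mul_nonneg (Real.rpow_nonneg (le_max_right _ _) α) (hQnonneg x)
  have hWpos : ∀ x, 0 < x → 0 < W x := fun x hx =>
    mul_pos (Real.rpow_pos_of_pos (lt_max_of_lt_left hx) α) (hQpos x)
  -- integrability of W and x * W on intervals in [0, ∞)
  have hWint : ∀ a b : ℝ, 0 ≤ a → a ≤ b → IntervalIntegrable W volume a b := by
    intro a b ha hab
    have hbnd : IntervalIntegrable (fun x : ℝ => x ^ α * Q 0) volume a b :=
      (intervalIntegral.intervalIntegrable_rpow' (by linarith : (-1:ℝ) < α)).mul_const _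
    refine hbnd.mono_fun hWmeas.aestronglyMeasurable ?_
    rw [uIoc_of_le hab]
    filter_upwards [ae_restrict_mem measurableSet_Ioc] with x hx
    have hx0 : 0 < x := lt_of_le_of_lt ha hx.1
    have h1 : 0 ≤ x ^ α := Real.rpow_nonneg hx0.le α
    have hmx : max x 0 = x := max_eq_left hx0.le
    simp only [Real.norm_eq_abs, hWdef, hmx, abs_of_nonneg (mul_nonneg h1 (hQnonneg x)),
      abs_of_nonneg (mul_nonneg h1 (hQnonneg 0))]
    exact mul_le_mul_of_nonneg_left (hQanti hx0.le) h1
  have hxWint : ∀ a b : ℝ, 0 ≤ a → a ≤ b →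
      IntervalIntegrable (fun x => x * W x) volume a b := fun a b ha hab =>
    (hWint a b ha hab).continuousOn_mul continuous_id.continuousOn
  -- identification of the iterated integrals with W
  have hinner : ∀ x y : ℝ, 0 ≤ x → 0 ≤ y →
      (∫ v in Ioi c, h x y v) = x ^ α * (y ^ β * J (x + y + 1)) := by
    intro x y hx hy
    have hmax : max (x + y + 1) 1 = x + y + 1 := max_eq_left (by linarith)
    have : ∀ v : ℝ, h x y v = x ^ α * (y ^ β * (v ^ γ * Real.exp (-(max (x+y+1) 1 / 2) * v))) := by
      intro v
      rw [hh, hmax, show -v * (x + y + 1) / 2 = -((x + y + 1) / 2) * v by ring]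
      ring
    simp only [this]
    rw [MeasureTheory.integral_const_mul, MeasureTheory.integral_const_mul]
  have hmid : ∀ x : ℝ, 0 ≤ x →
      (∫ y in (0:ℝ)..G, ∫ v in Ioi c, h x y v) = W x := by
    intro x hx
    have hmx : max x 0 = x := max_eq_left hx
    have : (∫ y in (0:ℝ)..G, ∫ v in Ioi c, h x y v)
        = ∫ y in (0:ℝ)..G, x ^ α * (y ^ β * J (max x 0 + y + 1)) := by
      refine intervalIntegral.integral_congr fun y hy => ?_
      rw [uIcc_of_le hG.le] at hy
      rw [hmx, hinner x y hx hy.1]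
    rw [this, intervalIntegral.integral_const_mul]
    simp only [hWdef, hQdef, hmx]
  have hNum : ∀ F : ℝ, 0 < F →
      (∫ x in (0:ℝ)..F, ∫ y in (0:ℝ)..G, ∫ v in Ioi c, x * h x y v)
        = ∫ x in (0:ℝ)..F, x * W x := by
    intro F hF
    refine intervalIntegral.integral_congr fun x hx => ?_
    rw [uIcc_of_le hF.le] at hx
    have : (∫ y in (0:ℝ)..G, ∫ v in Ioi c, x * h x y v)
        = ∫ y in (0:ℝ)..G, x * ∫ v in Ioi c, h x y v := by
      refine intervalIntegral.integral_congr fun y hy => ?_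
      exact MeasureTheory.integral_const_mul x _
    rw [this, intervalIntegral.integral_const_mul, hmid x hx.1]
  have hDen : ∀ F : ℝ, 0 < F →
      (∫ x in (0:ℝ)..F, ∫ y in (0:ℝ)..G, ∫ v in Ioi c, h x y v)
        = ∫ x in (0:ℝ)..F, W x := by
    intro F hF
    refine intervalIntegral.integral_congr fun x hx => ?_
    rw [uIcc_of_le hF.le] at hx
    exact hmid x hx.1
  have hΦ' : ∀ F : ℝ, 0 < F →
      Φ F = (∫ x in (0:ℝ)..F, x * W x) / (∫ x in (0:ℝ)..F, W x) := by
    intro F hF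
    rw [hΦ F hF, hNum F hF, hDen F hF]
  -- now the main monotonicity argument
  set D₁ : ℝ := ∫ x in (0:ℝ)..F₁, W x with hD₁
  set N₁ : ℝ := ∫ x in (0:ℝ)..F₁, x * W x with hN₁
  set B : ℝ := ∫ x in F₁..F₂, W x with hB
  set A : ℝ := ∫ x in F₁..F₂, x * W x with hA
  have hWi1 := hWint 0 F₁ le_rfl hF₁.le
  have hWi12 := hWint F₁ F₂ hF₁.le hF₁₂
  have hWi2 := hWint 0 F₂ le_rfl hF₂.le
  have hxWi1 := hxWint 0 F₁ le_rfl hF₁.le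
  have hxWi12 := hxWint F₁ F₂ hF₁.le hF₁₂
  have hD₁pos : 0 < D₁ :=
    intervalIntegral.intervalIntegral_pos_of_pos_on hWi1 (fun x hx => hWpos x hx.1) hF₁
  have hBnonneg : 0 ≤ B :=
    intervalIntegral.integral_nonneg hF₁₂ fun x _ => hWnonneg x
  have hD2 : (∫ x in (0:ℝ)..F₂, W x) = D₁ + B :=
    (intervalIntegral.integral_add_adjacent_intervals hWi1 hWi12).symm
  have hN2 : (∫ x in (0:ℝ)..F₂, x * W x) = N₁ + A :=
    (intervalIntegral.integral_add_adjacent_intervals hxWi1 hxWi12).symm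
  have hN₁le : N₁ ≤ F₁ * D₁ := by
    have : F₁ * D₁ = ∫ x in (0:ℝ)..F₁, F₁ * W x := by
      rw [intervalIntegral.integral_const_mul]
    rw [this]
    refine intervalIntegral.integral_mono_on hF₁.le hxWi1 (hWi1.const_mul F₁) fun x hx => ?_
    exact mul_le_mul_of_nonneg_right hx.2 (hWnonneg x)
  have hAge : F₁ * B ≤ A := by
    have : F₁ * B = ∫ x in F₁..F₂, F₁ * W x := by
      rw [intervalIntegral.integral_const_mul]
    rw [this]
    refine intervalIntegral.integral_mono_on hF₁₂ (hWi12.const_mul F₁) hxWi12 fun x hx => ?_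
    exact mul_le_mul_of_nonneg_right hx.1 (hWnonneg x)
  have hD₂pos : 0 < D₁ + B := by linarith
  rw [hΦ' F₁ hF₁, hΦ' F₂ hF₂, hD2, hN2, ← hD₁, ← hN₁,
    div_le_div_iff₀ hD₁pos hD₂pos]
  nlinarith [mul_le_mul_of_nonneg_right hN₁le hBnonneg,
    mul_le_mul_of_nonneg_right hAge hD₁pos.le]
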